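/- arXiv:2403.06733 — 3 statements merged into one kernel-verified Lean document; each statement's English description precedes it below -/
import Mathlib

section
/- Let (Ω, 𝔅, ν) be a measure space with σ-finite measure ν, let H be a complex Hilbert space, and let P : Ω → B(H) be a Bochner-integrable function (with respect to the operator norm on the Banach space B(H) of bounded operators). Then the closed linear span in B(H) of the set {∫_B P(ω) ν(dω) : B ∈ 𝔅 measurable} equals the norm closure of the set {∫_Ω f(ω) P(ω) ν(dω) : f ∈ L^∞(Ω, ν)}. -/
open MeasureTheory ENNReal

private lemma integral_simpleFunc_smul_mem_span
    {Ω : Type*} [MeasurableSpace Ω] (ν : Measure Ω)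
    {H : Type*} [NormedAddCommGroup H] [InnerProductSpace ℂ H] [CompleteSpace H]
    (P : Ω → H →L[ℂ] H) (hP : Integrable P ν) (g : SimpleFunc Ω ℂ) :
    (∫ ω, g ω • P ω ∂ν) ∈ Submodule.span ℂ
      {T : H →L[ℂ] H | ∃ B : Set Ω, MeasurableSet B ∧ T = ∫ ω in B, P ω ∂ν} := by
  induction g using SimpleFunc.induction with
  | const c hs =>
    rename_i s
    have : (∫ ω, (SimpleFunc.piecewise s hs (SimpleFunc.const Ω c)
        (SimpleFunc.const Ω 0)) ω • P ω ∂ν) = c • ∫ ω in s, P ω ∂ν := by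
      rw [← integral_smul]
      rw [← integral_indicator hs]
      congr 1
      ext ω
      by_cases hω : ω ∈ s <;>
        simp [SimpleFunc.coe_piecewise, Set.piecewise, Set.indicator, hω]
    rw [this]
    exact Submodule.smul_mem _ _ (Submodule.subset_span ⟨s, hs, rfl⟩)
  | add hdisj hf hg =>
    rename_i f g
    have h1 : Integrable (fun ω => f ω • P ω) ν :=
      hP.smul_of_top_right (f.memLp_top ν)
    have h2 : Integrable (fun ω => g ω • P ω) ν :=
      hP.smul_of_top_right (g.memLp_top ν)
    have heq : (∫ ω, (f + g) ω • P ω ∂ν)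
        = (∫ ω, f ω • P ω ∂ν) + ∫ ω, g ω • P ω ∂ν := by
      calc (∫ ω, (f + g) ω • P ω ∂ν) = ∫ ω, (f ω • P ω + g ω • P ω) ∂ν := by
            congr 1; ext ω; simp [add_smul]
        _ = _ := integral_add h1 h2
    rw [heq]
    exact Submodule.add_mem _ hf hg

/-- Let `(Ω, 𝔅, ν)` be a measure space with `ν` σ-finite, `H` a
complex Hilbert space and `P : Ω → B(H)` Bochner integrable (in operator norm).
Then the closed linear span of the operators `∫_B P dν` (over measurable sets `B`)
coincides with the norm closure of the set of operators `∫_Ω f(ω) P(ω) ν(dω)` with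
`f ∈ L^∞(Ω, ν)`. -/
theorem closed_span_setIntegrals_eq_closure_boundedIntegrals
    {Ω : Type*} [MeasurableSpace Ω] (ν : Measure Ω) [SigmaFinite ν]
    {H : Type*} [NormedAddCommGroup H] [InnerProductSpace ℂ H] [CompleteSpace H]
    (P : Ω → H →L[ℂ] H) (hP : Integrable P ν) :
    ((Submodule.span ℂ
        {T : H →L[ℂ] H | ∃ B : Set Ω, MeasurableSet B ∧ T = ∫ ω in B, P ω ∂ν}).topologicalClosure
        : Set (H →L[ℂ] H)) =
      closure {T : H →L[ℂ] H | ∃ f : Ω → ℂ, MemLp f ⊤ ν ∧ T = ∫ ω, f ω • P ω ∂ν} := by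
  set S : Set (H →L[ℂ] H) :=
    {T | ∃ B : Set Ω, MeasurableSet B ∧ T = ∫ ω in B, P ω ∂ν} with hS
  set R : Set (H →L[ℂ] H) :=
    {T | ∃ f : Ω → ℂ, MemLp f ⊤ ν ∧ T = ∫ ω, f ω • P ω ∂ν} with hR
  -- R is a submodule
  have hR0 : (0 : H →L[ℂ] H) ∈ R := ⟨0, memLp_top_of_bound aestronglyMeasurable_const 0
    (Filter.Eventually.of_forall (by simp)), by simp⟩
  have hRadd : ∀ a ∈ R, ∀ b ∈ R, a + b ∈ R := by
    rintro a ⟨f, hf, rfl⟩ b ⟨g, hg, rfl⟩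
    refine ⟨f + g, hf.add hg, ?_⟩
    have h1 : Integrable (fun ω => f ω • P ω) ν := hP.smul_of_top_right hf
    have h2 : Integrable (fun ω => g ω • P ω) ν := hP.smul_of_top_right hg
    calc (∫ ω, f ω • P ω ∂ν) + ∫ ω, g ω • P ω ∂ν
        = ∫ ω, (f ω • P ω + g ω • P ω) ∂ν := (integral_add h1 h2).symm
      _ = ∫ ω, (f + g) ω • P ω ∂ν := by congr 1; ext ω; simp [add_smul]
  have hRsmul : ∀ (c : ℂ), ∀ a ∈ R, c • a ∈ R := by
    rintro c a ⟨f, hf, rfl⟩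
    refine ⟨c • f, hf.const_smul c, ?_⟩
    rw [← integral_smul]
    congr 1; ext ω; simp [smul_smul]
  have hSR : S ⊆ R := by
    rintro T ⟨B, hB, rfl⟩
    refine ⟨B.indicator 1, memLp_top_of_bound
      ((aestronglyMeasurable_const (b := (1:ℂ))).indicator hB) 1
      (Filter.Eventually.of_forall fun x => ?_), ?_⟩
    · by_cases hx : x ∈ B <;> simp [Set.indicator, hx]
    · rw [← integral_indicator hB]
      congr 1; ext ω
      by_cases hx : ω ∈ B <;> simp [Set.indicator, hx]
  apply subset_antisymm
  · rw [Submodule.topologicalClosure_coe]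
    apply closure_mono
    let M : Submodule ℂ (H →L[ℂ] H) :=
      { carrier := R
        zero_mem' := hR0
        add_mem' := fun ha hb => hRadd _ ha _ hb
        smul_mem' := fun c a ha => hRsmul c a ha }
    exact Submodule.span_le.2 (show S ⊆ (M : Set _) from hSR)
  · apply closure_minimal _ (Submodule.isClosed_topologicalClosure _)
    rintro T ⟨f, hf, rfl⟩
    -- replace f by a measurable, everywhere-bounded version
    obtain ⟨g, hg_sm, hfg⟩ := hf.aestronglyMeasurable
    set C : ℝ := (eLpNormEssSup f ν).toReal with hCdef
    have hC0 : 0 ≤ C := ENNReal.toReal_nonneg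
    have hfC : ∀ᵐ x ∂ν, ‖f x‖ ≤ C := by
      filter_upwards [ae_le_eLpNormEssSup (f := f) (μ := ν)] with x hx
      have htop : eLpNormEssSup f ν ≠ ⊤ := by
        have h2 := hf.2
        rw [eLpNorm_exponent_top] at h2
        exact h2.ne
      calc ‖f x‖ = ((‖f x‖₊ : ℝ≥0∞)).toReal := by simp
        _ ≤ C := ENNReal.toReal_mono htop hx
    set s : Set Ω := ({x | ‖g x‖ ≤ C} : Set Ω) with hsdef
    have hs_meas : MeasurableSet s := by
      have : Measurable fun x => ‖g x‖ := hg_sm.measurable.norm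
      exact measurableSet_le this measurable_const
    set f' : Ω → ℂ := s.indicator g with hf'def
    have hf'_sm : StronglyMeasurable f' := hg_sm.indicator hs_meas
    have hf'_bd : ∀ x, ‖f' x‖ ≤ C := by
      intro x
      by_cases hx : x ∈ s
      · rw [hf'def, Set.indicator_of_mem hx]
        exact hx
      · simp [f', Set.indicator, hx, hC0]
    have hff' : f =ᵐ[ν] f' := by
      filter_upwards [hfg, hfC] with x hx hCx
      have hxs : x ∈ s := by simp only [hsdef, Set.mem_setOf_eq, ← hx]; exact hCx
      simp [f', Set.indicator, hxs, hx]
    have hint_eq : (∫ ω, f ω • P ω ∂ν) = ∫ ω, f' ω • P ω ∂ν := by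
      apply integral_congr_ae
      filter_upwards [hff'] with x hx using by rw [hx]
    rw [hint_eq]
    -- approximate f' by simple functions
    have h0mem : (0 : ℂ) ∈ Metric.closedBall (0:ℂ) C := Metric.mem_closedBall_self hC0
    set G : ℕ → SimpleFunc Ω ℂ :=
      SimpleFunc.approxOn f' hf'_sm.measurable (Metric.closedBall (0:ℂ) C) 0 h0mem with hG
    have hGbd : ∀ n x, ‖G n x‖ ≤ C := by
      intro n x
      have := SimpleFunc.approxOn_mem hf'_sm.measurable h0mem n x
      simpa [Metric.mem_closedBall, dist_eq_norm] using this
    have hGtend : ∀ x, Filter.Tendsto (fun n => G n x) Filter.atTop (nhds (f' x)) := by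
      intro x
      apply SimpleFunc.tendsto_approxOn hf'_sm.measurable h0mem
      rw [Metric.closure_closedBall]
      simpa [Metric.mem_closedBall, dist_eq_norm] using hf'_bd x
    have hTend : Filter.Tendsto (fun n => ∫ ω, G n ω • P ω ∂ν) Filter.atTop
        (nhds (∫ ω, f' ω • P ω ∂ν)) := by
      apply tendsto_integral_of_dominated_convergence (fun ω => C * ‖P ω‖)
      · intro n
        exact ((G n).stronglyMeasurable.aestronglyMeasurable).smul hP.1
      · exact hP.norm.const_mul C
      · intro n
        filter_upwards with ω
        rw [norm_smul]
        exact mul_le_mul_of_nonneg_right (hGbd n ω) (norm_nonneg _)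
      · filter_upwards with ω
        exact (hGtend ω).smul tendsto_const_nhds
    have hmem : ∀ n, (∫ ω, G n ω • P ω ∂ν) ∈ Submodule.span ℂ S :=
      fun n => integral_simpleFunc_smul_mem_span ν P hP (G n)
    exact mem_closure_of_tendsto hTend (Filter.Eventually.of_forall hmem)
end

section
/- Let (Ω, 𝔅, ν) be a measure space with σ-finite measure ν, let H be a complex Hilbert space, and let P : Ω → B(H) be a Bochner-integrable function such that P(ω) is a positive operator for ν-almost every ω. Then for every f ∈ L^∞(Ω, ν) the operator ∫_Ω f(ω) P(ω) ν(dω) satisfies ‖∫_Ω f(ω) P(ω) ν(dω)‖ ≤ ‖f‖_{L^∞} · ‖∫_Ω P(ω) ν(dω)‖, where ‖·‖ is the operator norm. -/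
open MeasureTheory ContinuousLinearMap Complex
open scoped InnerProductSpace

set_option linter.unusedSectionVars false

section auxCS
variable {H : Type*} [NormedAddCommGroup H] [InnerProductSpace ℂ H] [CompleteSpace H]

private lemma amgm_aux' {a b c t : ℝ} (ht : 0 < t) (ha : 0 ≤ a) (hb : 0 ≤ b) (hc : 0 ≤ c)
    (h : c * c ≤ a * b) : 2 * t * c ≤ t ^ 2 * a + b := by
  have hab : c ≤ Real.sqrt a * Real.sqrt b := by
    rw [← Real.sqrt_mul ha b, ← Real.sqrt_mul_self hc]
    exact Real.sqrt_le_sqrt h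
  nlinarith [sq_nonneg (t * Real.sqrt a - Real.sqrt b), Real.sq_sqrt ha, Real.sq_sqrt hb,
    Real.sqrt_nonneg a, Real.sqrt_nonneg b]

/-- The positive-semidefinite sesquilinear form of a positive operator, as a
`PreInnerProductSpace.Core`. -/
noncomputable def posOpCore (A : H →L[ℂ] H) (hA : A.IsPositive) :
    PreInnerProductSpace.Core ℂ H :=
  { inner := fun u v => ⟪u, A v⟫_ℂ
    conj_inner_symm := fun u v => by
      have h : ⟪A u, v⟫_ℂ = ⟪u, A v⟫_ℂ := by
        conv_lhs => rw [← hA.isSelfAdjoint.adjoint_eq]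
        exact ContinuousLinearMap.adjoint_inner_left A v u
      show (starRingEnd ℂ) ⟪v, A u⟫_ℂ = ⟪u, A v⟫_ℂ
      rw [inner_conj_symm]
      exact h
    re_inner_nonneg := fun u => hA.re_inner_nonneg_right u
    add_left := fun u v w => inner_add_left u v (A w)
    smul_left := fun u v r => inner_smul_left u (A v) r }

/-- Cauchy–Schwarz plus AM–GM for a positive operator. -/
lemma pos_op_cs (A : H →L[ℂ] H) (hA : A.IsPositive) (x y : H) {t : ℝ} (ht : 0 < t) :
    2 * t * ‖⟪x, A y⟫_ℂ‖ ≤ t ^ 2 * (⟪x, A x⟫_ℂ).re + (⟪y, A y⟫_ℂ).re := by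
  have hcs : ‖⟪x, A y⟫_ℂ‖ * ‖⟪y, A x⟫_ℂ‖ ≤ (⟪x, A x⟫_ℂ).re * (⟪y, A y⟫_ℂ).re :=
    InnerProductSpace.Core.inner_mul_inner_self_le (c := posOpCore A hA) x y
  have hsym : ‖⟪y, A x⟫_ℂ‖ = ‖⟪x, A y⟫_ℂ‖ := by
    have h1 : ⟪A x, y⟫_ℂ = ⟪x, A y⟫_ℂ := by
      conv_lhs => rw [← hA.isSelfAdjoint.adjoint_eq]
      exact ContinuousLinearMap.adjoint_inner_left A y x
    rw [← h1, ← inner_conj_symm, RCLike.norm_conj]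
  rw [hsym] at hcs
  have ha := hA.re_inner_nonneg_right x
  have hb := hA.re_inner_nonneg_right y
  simp only [RCLike.re_to_complex] at ha hb
  exact amgm_aux' ht ha hb (norm_nonneg _) hcs

/-- The continuous linear functional `A ↦ ⟪x, A y⟫` on operators. -/
noncomputable def innerEvalCLM (x y : H) : (H →L[ℂ] H) →L[ℂ] ℂ :=
  (innerSL ℂ x).comp (ContinuousLinearMap.apply ℂ H y)

@[simp] lemma innerEvalCLM_apply (x y : H) (A : H →L[ℂ] H) :
    innerEvalCLM x y A = ⟪x, A y⟫_ℂ := rfl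

/-- The real continuous linear functional `A ↦ re ⟪x, A y⟫`. -/
noncomputable def reInnerEvalCLM (x y : H) : (H →L[ℂ] H) →L[ℝ] ℝ :=
  Complex.reCLM.comp ((innerEvalCLM x y).restrictScalars ℝ)

@[simp] lemma reInnerEvalCLM_apply (x y : H) (A : H →L[ℂ] H) :
    reInnerEvalCLM x y A = (⟪x, A y⟫_ℂ).re := rfl

end auxCS

/-- Let `(Ω, 𝔅, ν)` be a measure space with `ν` σ-finite, `H` a
complex Hilbert space and `P : Ω → B(H)` Bochner integrable with `P(ω)` a positive
operator for ν-a.e. `ω`.  Then for every `f ∈ L^∞(Ω, ν)`,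
`‖∫ f(ω) P(ω) ν(dω)‖ ≤ ‖f‖_{L^∞} ⬝ ‖∫ P(ω) ν(dω)‖` in the operator norm. -/
theorem norm_integral_smul_le_of_ae_isPositive
    {Ω : Type*} [MeasurableSpace Ω] (ν : Measure Ω) [SigmaFinite ν]
    {H : Type*} [NormedAddCommGroup H] [InnerProductSpace ℂ H] [CompleteSpace H]
    (P : Ω → H →L[ℂ] H) (hP : Integrable P ν)
    (hPpos : ∀ᵐ ω ∂ν, (P ω).IsPositive)
    (f : Ω → ℂ) (hf : MemLp f ⊤ ν) :
    ‖∫ ω, f ω • P ω ∂ν‖ ≤ (eLpNorm f ⊤ ν).toReal * ‖∫ ω, P ω ∂ν‖ := by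
  set M : ℝ := (eLpNorm f ⊤ ν).toReal with hMdef
  have hM0 : 0 ≤ M := ENNReal.toReal_nonneg
  set S : H →L[ℂ] H := ∫ ω, P ω ∂ν with hSdef
  set T : H →L[ℂ] H := ∫ ω, f ω • P ω ∂ν with hTdef
  -- a.e. bound on f
  have hftop : eLpNorm f ⊤ ν ≠ ⊤ := hf.2.ne
  have hfbd : ∀ᵐ ω ∂ν, ‖f ω‖ ≤ M := by
    filter_upwards [ae_le_eLpNormEssSup (f := f) (μ := ν)] with ω hω
    have h1 : (‖f ω‖₊ : ENNReal) ≤ eLpNorm f ⊤ ν := by rwa [eLpNorm_exponent_top]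
    calc ‖f ω‖ = ((‖f ω‖₊ : ENNReal)).toReal := by simp
      _ ≤ M := ENNReal.toReal_mono hftop h1
  -- integrability of `f • P`
  have hfP : Integrable (fun ω => f ω • P ω) ν := by
    refine Integrable.mono' (hP.norm.const_mul M) (hf.1.smul hP.1) ?_
    filter_upwards [hfbd] with ω hω
    rw [norm_smul]
    exact mul_le_mul_of_nonneg_right hω (norm_nonneg _)
  -- quadratic forms of `S`
  have hSquad : ∀ x : H, (⟪x, S x⟫_ℂ).re ≤ ‖S‖ * ‖x‖ ^ 2 := by
    intro x
    calc (⟪x, S x⟫_ℂ).re ≤ ‖⟪x, S x⟫_ℂ‖ := Complex.re_le_norm _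
      _ ≤ ‖x‖ * ‖S x‖ := norm_inner_le_norm x (S x)
      _ ≤ ‖x‖ * (‖S‖ * ‖x‖) := by
        exact mul_le_mul_of_nonneg_left (S.le_opNorm x) (norm_nonneg x)
      _ = ‖S‖ * ‖x‖ ^ 2 := by ring
  -- integrability of the quadratic forms of `P`
  have hq_int : ∀ x : H, Integrable (fun ω => (⟪x, P ω x⟫_ℂ).re) ν := fun x => by
    simpa using (reInnerEvalCLM x x).integrable_comp hP
  have hq_eq : ∀ x : H, (∫ ω, (⟪x, P ω x⟫_ℂ).re ∂ν) = (⟪x, S x⟫_ℂ).re := fun x =>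
    (reInnerEvalCLM x x).integral_comp_comm hP
  -- key bound with a free parameter t
  have key2 : ∀ (x y : H) (t : ℝ), 0 < t →
      2 * t * ‖⟪x, T y⟫_ℂ‖ ≤ M * (t ^ 2 * (‖S‖ * ‖x‖ ^ 2) + ‖S‖ * ‖y‖ ^ 2) := by
    intro x y t ht
    have hTxy : ⟪x, T y⟫_ℂ = ∫ ω, f ω * ⟪x, P ω y⟫_ℂ ∂ν := by
      have := (innerEvalCLM x y).integral_comp_comm hfP
      simpa using this.symm
    set bnd : Ω → ℝ :=
      fun ω => (M / (2 * t)) * (t ^ 2 * (⟪x, P ω x⟫_ℂ).re + (⟪y, P ω y⟫_ℂ).re) with hbnd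
    have hbnd_int : Integrable bnd ν :=
      (((hq_int x).const_mul (t ^ 2)).add (hq_int y)).const_mul (M / (2 * t))
    have hnorm : ‖⟪x, T y⟫_ℂ‖ ≤ ∫ ω, bnd ω ∂ν := by
      rw [hTxy]
      refine norm_integral_le_of_norm_le hbnd_int ?_
      filter_upwards [hfbd, hPpos] with ω hω hpos
      have hcs := pos_op_cs (P ω) hpos x y ht
      have h2t : (0:ℝ) < 2 * t := by linarith
      rw [norm_mul, hbnd]
      have h3 : ‖⟪x, P ω y⟫_ℂ‖ ≤ (t ^ 2 * (⟪x, P ω x⟫_ℂ).re + (⟪y, P ω y⟫_ℂ).re) / (2 * t) :=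
        (le_div_iff₀' h2t).mpr hcs
      calc ‖f ω‖ * ‖⟪x, P ω y⟫_ℂ‖
          ≤ M * ((t ^ 2 * (⟪x, P ω x⟫_ℂ).re + (⟪y, P ω y⟫_ℂ).re) / (2 * t)) :=
            mul_le_mul hω h3 (norm_nonneg _) hM0
        _ = (M / (2 * t)) * (t ^ 2 * (⟪x, P ω x⟫_ℂ).re + (⟪y, P ω y⟫_ℂ).re) := by ring
    have hint : ∫ ω, bnd ω ∂ν
        = (M / (2 * t)) * (t ^ 2 * (⟪x, S x⟫_ℂ).re + (⟪y, S y⟫_ℂ).re) := by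
      rw [hbnd]
      rw [integral_const_mul]
      rw [integral_add ((hq_int x).const_mul (t ^ 2)) (hq_int y), integral_const_mul,
        hq_eq x, hq_eq y]
    have hle : ∫ ω, bnd ω ∂ν ≤ (M / (2 * t)) * (t ^ 2 * (‖S‖ * ‖x‖ ^ 2) + ‖S‖ * ‖y‖ ^ 2) := by
      rw [hint]
      have h1 : t ^ 2 * (⟪x, S x⟫_ℂ).re + (⟪y, S y⟫_ℂ).re
          ≤ t ^ 2 * (‖S‖ * ‖x‖ ^ 2) + ‖S‖ * ‖y‖ ^ 2 :=
        add_le_add (mul_le_mul_of_nonneg_left (hSquad x) (sq_nonneg t)) (hSquad y)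
      exact mul_le_mul_of_nonneg_left h1 (div_nonneg hM0 (by linarith))
    have ht' : t ≠ 0 := ne_of_gt ht
    calc 2 * t * ‖⟪x, T y⟫_ℂ‖ ≤ 2 * t * ((M / (2 * t)) *
          (t ^ 2 * (‖S‖ * ‖x‖ ^ 2) + ‖S‖ * ‖y‖ ^ 2)) := by
          have := hnorm.trans hle
          nlinarith
      _ = M * (t ^ 2 * (‖S‖ * ‖x‖ ^ 2) + ‖S‖ * ‖y‖ ^ 2) := by field_simp
  -- the key sesquilinear bound
  have key : ∀ x y : H, ‖⟪x, T y⟫_ℂ‖ ≤ M * ‖S‖ * (‖x‖ * ‖y‖) := by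
    intro x y
    rcases eq_or_ne x 0 with rfl | hx
    · simp
    rcases eq_or_ne y 0 with rfl | hy
    · simp
    have hx0 : (0:ℝ) < ‖x‖ := norm_pos_iff.mpr hx
    have hy0 : (0:ℝ) < ‖y‖ := norm_pos_iff.mpr hy
    have ht : (0:ℝ) < ‖y‖ / ‖x‖ := div_pos hy0 hx0
    have h := key2 x y (‖y‖ / ‖x‖) ht
    have hsimp : (‖y‖ / ‖x‖) ^ 2 * (‖S‖ * ‖x‖ ^ 2) = ‖S‖ * ‖y‖ ^ 2 := by
      field_simp
    rw [hsimp] at h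
    -- h : 2 * (‖y‖/‖x‖) * ‖⟪x, T y⟫‖ ≤ M * (‖S‖ * ‖y‖^2 + ‖S‖ * ‖y‖^2)
    have h2 : 2 * (‖y‖ / ‖x‖) * ‖⟪x, T y⟫_ℂ‖ ≤ 2 * (M * ‖S‖ * ‖y‖ ^ 2) := by
      calc 2 * (‖y‖ / ‖x‖) * ‖⟪x, T y⟫_ℂ‖ ≤ M * (‖S‖ * ‖y‖ ^ 2 + ‖S‖ * ‖y‖ ^ 2) := h
        _ = 2 * (M * ‖S‖ * ‖y‖ ^ 2) := by ring
    have h3 : (‖y‖ / ‖x‖) * ‖⟪x, T y⟫_ℂ‖ ≤ M * ‖S‖ * ‖y‖ ^ 2 := by linarith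
    rw [div_mul_eq_mul_div, div_le_iff₀ hx0] at h3
    have h4 : ‖y‖ * ‖⟪x, T y⟫_ℂ‖ ≤ ‖y‖ * (M * ‖S‖ * (‖x‖ * ‖y‖)) := by
      calc ‖y‖ * ‖⟪x, T y⟫_ℂ‖ ≤ M * ‖S‖ * ‖y‖ ^ 2 * ‖x‖ := h3
        _ = ‖y‖ * (M * ‖S‖ * (‖x‖ * ‖y‖)) := by ring
    exact le_of_mul_le_mul_left h4 hy0
  -- conclude with the operator norm
  refine ContinuousLinearMap.opNorm_le_bound T (mul_nonneg hM0 (norm_nonneg S)) fun y => ?_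
  rcases eq_or_ne (T y) 0 with h0 | h0
  · rw [h0]
    simp [mul_nonneg (mul_nonneg hM0 (norm_nonneg S)) (norm_nonneg y)]
  have hpos : (0:ℝ) < ‖T y‖ := norm_pos_iff.mpr h0
  have h1 : ‖T y‖ * ‖T y‖ = (⟪T y, T y⟫_ℂ).re := by
    have := inner_self_eq_norm_mul_norm (𝕜 := ℂ) (E := H) (T y)
    simpa using this.symm
  have h2 : ‖T y‖ * ‖T y‖ ≤ (M * ‖S‖ * ‖y‖) * ‖T y‖ := by
    calc ‖T y‖ * ‖T y‖ = (⟪T y, T y⟫_ℂ).re := h1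
      _ ≤ ‖⟪T y, T y⟫_ℂ‖ := Complex.re_le_norm _
      _ ≤ M * ‖S‖ * (‖T y‖ * ‖y‖) := key (T y) y
      _ = (M * ‖S‖ * ‖y‖) * ‖T y‖ := by ring
  exact le_of_mul_le_mul_right h2 hpos
end

section
/- Let (J_k)_{k∈ℕ₀} be a sequence of distinct real numbers and (c_k)_{k∈ℕ₀} positive real numbers, and let R ∈ (0, ∞] be such that N(x)² := Σ_{k=0}^∞ x^k / c_k converges and is positive for all x ∈ [0, R). Let τ : [0, R) → [0, ∞) be a measurable function satisfying the moment conditions ∫_0^R (x^k / N(x)²) τ(x) dx = c_k for all k ∈ ℕ₀, and let μ be a measure on ℝ such that ∫ e^{i(J_k − J_l) y} μ(dy) = δ_{kl} for all k, l ∈ ℕ₀. For x ∈ [0, R) and y ∈ ℝ define the unit vector |J, x, y⟩ = N(x)^{-1} Σ_{k=0}^∞ (x^{k/2} e^{-i J_k y}/√c_k) e_k in ℓ²(ℕ₀), where (e_k) is the standard orthonormal basis. Then for every ψ ∈ ℓ²(ℕ₀), ∫_ℝ ∫_0^R |⟨J, x, y | ψ⟩|² τ(x) dx μ(dy) = ‖ψ‖².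 -/
open MeasureTheory
open scoped ENNReal

/-- The `k`-th coefficient of the Gazeau–Klauder coherent state
`|J,x,y⟩ = N(x)⁻¹ ∑_k (x^{k/2} e^{-i J_k y} / √c_k) e_k` in the standard orthonormal
basis of `ℓ²(ℕ₀)`; here `NN = N` is the normalization factor. -/
noncomputable def gkCoeff (NN : ℝ → ℝ) (c : ℕ → ℝ) (J : ℕ → ℝ) (x y : ℝ) (k : ℕ) : ℂ :=
  (((NN x)⁻¹ * Real.sqrt x ^ k / Real.sqrt (c k) : ℝ) : ℂ) *
    Complex.exp (-(Complex.I * (J k : ℂ) * (y : ℂ)))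

private lemma gk_conj (NN : ℝ → ℝ) (c : ℕ → ℝ) (J : ℕ → ℝ) (x y : ℝ) (k : ℕ) :
    (starRingEnd ℂ) (gkCoeff NN c J x y k) =
      (((NN x)⁻¹ * Real.sqrt x ^ k / Real.sqrt (c k) : ℝ) : ℂ) *
        Complex.exp (Complex.I * (J k : ℂ) * (y : ℂ)) := by
  unfold gkCoeff
  rw [map_mul, ← Complex.exp_conj]
  simp [Complex.conj_ofReal]

private lemma psi_sq_summable (ψ : lp (fun _ : ℕ => ℂ) 2) :
    Summable (fun k => ‖ψ k‖ ^ 2) := by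
  have h := ψ.property.summable (p := 2) (by norm_num)
  simpa [ENNReal.toReal_ofNat, Real.rpow_natCast] using h

private lemma psi_norm_sq (ψ : lp (fun _ : ℕ => ℂ) 2) :
    ‖ψ‖ ^ 2 = ∑' k, ‖ψ k‖ ^ 2 := by
  have h := lp.norm_rpow_eq_tsum (p := 2) (by norm_num) ψ
  simpa [Real.rpow_natCast] using h


section
variable (J : ℕ → ℝ) (c : ℕ → ℝ) (NN : ℝ → ℝ) (x : ℝ) (ψ : lp (fun _ : ℕ => ℂ) 2)

private lemma r_nonneg (hpos : 0 < NN x) (k : ℕ) :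
    0 ≤ (NN x)⁻¹ * Real.sqrt x ^ k / Real.sqrt (c k) :=
  div_nonneg (mul_nonneg (inv_nonneg.2 hpos.le) (pow_nonneg (Real.sqrt_nonneg x) _))
    (Real.sqrt_nonneg _)

private lemma r_sq (hc : ∀ k, 0 < c k) (hx0 : 0 ≤ x) (k : ℕ) :
    ((NN x)⁻¹ * Real.sqrt x ^ k / Real.sqrt (c k)) ^ 2 = ((NN x)⁻¹) ^ 2 * (x ^ k / c k) := by
  rw [div_pow, mul_pow, ← pow_mul, mul_comm k 2, pow_mul, Real.sq_sqrt hx0,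
    Real.sq_sqrt (hc k).le]
  ring

private lemma r_sq_summable (hc : ∀ k, 0 < c k) (hx0 : 0 ≤ x)
    (hsum : Summable (fun k => x ^ k / c k)) :
    Summable (fun k => ((NN x)⁻¹ * Real.sqrt x ^ k / Real.sqrt (c k)) ^ 2) := by
  have := hsum.mul_left (((NN x)⁻¹) ^ 2)
  refine this.congr fun k => (r_sq c NN x hc hx0 k).symm

private lemma a_summable (hc : ∀ k, 0 < c k) (hx0 : 0 ≤ x) (hpos : 0 < NN x)
    (hsum : Summable (fun k => x ^ k / c k)) :
    Summable (fun k => ((NN x)⁻¹ * Real.sqrt x ^ k / Real.sqrt (c k)) * ‖ψ k‖) := by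
  refine Summable.of_nonneg_of_le
    (fun k => mul_nonneg (r_nonneg c NN x hpos k) (norm_nonneg _))
    (fun k => ?_)
    (((r_sq_summable c NN x hc hx0 hsum).add (psi_sq_summable ψ)).div_const 2)
  set r := (NN x)⁻¹ * Real.sqrt x ^ k / Real.sqrt (c k)
  nlinarith [sq_nonneg (r - ‖ψ k‖)]

end

section
variable {J : ℕ → ℝ} {c : ℕ → ℝ} {NN : ℝ → ℝ} {x : ℝ} (ψ : lp (fun _ : ℕ => ℂ) 2)
  (μ : Measure ℝ) [IsProbabilityMeasure μ]

-- the one-term function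
noncomputable def gkTerm (J : ℕ → ℝ) (c : ℕ → ℝ) (NN : ℝ → ℝ) (x : ℝ)
    (ψ : lp (fun _ : ℕ => ℂ) 2) (k : ℕ) (y : ℝ) : ℂ :=
  (starRingEnd ℂ) (gkCoeff NN c J x y k) * ψ k

private lemma gkTerm_eq (k : ℕ) (y : ℝ) :
    gkTerm J c NN x ψ k y =
      (((NN x)⁻¹ * Real.sqrt x ^ k / Real.sqrt (c k) : ℝ) : ℂ) *
        Complex.exp (Complex.I * (J k : ℂ) * (y : ℂ)) * ψ k := by
  rw [gkTerm, gk_conj]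

private lemma gkTerm_norm (hpos : 0 < NN x) (k : ℕ) (y : ℝ) :
    ‖gkTerm J c NN x ψ k y‖ =
      ((NN x)⁻¹ * Real.sqrt x ^ k / Real.sqrt (c k)) * ‖ψ k‖ := by
  rw [gkTerm_eq]
  have h0 : 0 ≤ (NN x)⁻¹ * Real.sqrt x ^ k / Real.sqrt (c k) :=
    div_nonneg (mul_nonneg (inv_nonneg.2 hpos.le) (pow_nonneg (Real.sqrt_nonneg x) _))
      (Real.sqrt_nonneg _)
  rw [norm_mul, norm_mul, Complex.norm_real, Real.norm_eq_abs, abs_of_nonneg h0]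
  have : ‖Complex.exp (Complex.I * (J k : ℂ) * (y : ℂ))‖ = 1 := by
    rw [Complex.norm_exp]
    simp [Complex.mul_re]
  rw [this]; ring

private lemma gkTerm_continuous (k : ℕ) : Continuous (gkTerm J c NN x ψ k) := by
  have : Continuous fun y : ℝ => gkCoeff NN c J x y k := by
    unfold gkCoeff; fun_prop
  unfold gkTerm
  exact ((continuous_star.comp this).mul continuous_const)

end


section
variable {J : ℕ → ℝ} {c : ℕ → ℝ} {NN : ℝ → ℝ} {x : ℝ} (ψ : lp (fun _ : ℕ => ℂ) 2)
  (μ : Measure ℝ) [IsProbabilityMeasure μ]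

private lemma gk_yintegral
    (hc : ∀ k, 0 < c k)
    (hx0 : 0 ≤ x) (hsum : Summable (fun k => x ^ k / c k)) (hpos : 0 < NN x)
    (hμint : ∀ k l : ℕ,
      ∫ y, Complex.exp (Complex.I * (((J k - J l : ℝ)) : ℂ) * (y : ℂ)) ∂μ =
        if k = l then 1 else 0) :
    ∫ y, ‖∑' k, gkTerm J c NN x ψ k y‖ ^ 2 ∂μ
      = ∑' k, ((NN x)⁻¹ * Real.sqrt x ^ k / Real.sqrt (c k)) ^ 2 * ‖ψ k‖ ^ 2 := by
  classical
  set r : ℕ → ℝ := fun k => (NN x)⁻¹ * Real.sqrt x ^ k / Real.sqrt (c k) with hrdef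
  set a : ℕ → ℝ := fun k => r k * ‖ψ k‖ with hadef
  have hr_nonneg : ∀ k, 0 ≤ r k := r_nonneg c NN x hpos
  have ha_nonneg : ∀ k, 0 ≤ a k := fun k => mul_nonneg (hr_nonneg k) (norm_nonneg _)
  have ha : Summable a := a_summable c NN x ψ hc hx0 hpos hsum
  have hnorm : ∀ k y, ‖gkTerm J c NN x ψ k y‖ = a k := fun k y => gkTerm_norm ψ hpos k y
  have hsumm : ∀ y : ℝ, Summable (fun k => gkTerm J c NN x ψ k y) := fun y =>
    Summable.of_norm (by simpa [hnorm] using ha)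
  set w : ℕ × ℕ → ℝ → ℂ := fun p y =>
    gkTerm J c NN x ψ p.1 y * (starRingEnd ℂ) (gkTerm J c NN x ψ p.2 y) with hwdef
  have hwnorm : ∀ p y, ‖w p y‖ = a p.1 * a p.2 := by
    intro p y
    rw [hwdef]
    simp only [norm_mul, RCLike.norm_conj, hnorm]
  have haa : Summable (fun p : ℕ × ℕ => a p.1 * a p.2) :=
    ha.mul_of_nonneg ha ha_nonneg ha_nonneg
  have hwsummable : ∀ y, Summable (fun p => w p y) := fun y =>
    Summable.of_norm (by simpa [hwnorm] using haa)
  have hwcont : ∀ p : ℕ × ℕ, Continuous (fun y => w p y) := fun p =>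
    (gkTerm_continuous ψ p.1).mul (continuous_star.comp (gkTerm_continuous ψ p.2))
  have step1 : ∀ y, ‖∑' k, gkTerm J c NN x ψ k y‖ ^ 2 = ∑' p : ℕ × ℕ, (w p y).re := by
    intro y
    have hconj : (starRingEnd ℂ) (∑' k, gkTerm J c NN x ψ k y)
        = ∑' k, (starRingEnd ℂ) (gkTerm J c NN x ψ k y) := by
      simp only [starRingEnd_apply]
      exact tsum_star
    have hmul : (∑' k, gkTerm J c NN x ψ k y) *
        (starRingEnd ℂ) (∑' k, gkTerm J c NN x ψ k y) = ∑' p : ℕ × ℕ, w p y := by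
      rw [hconj]
      exact tsum_mul_tsum_of_summable_norm (by simpa [hnorm] using ha)
        (by simpa [RCLike.norm_conj, hnorm] using ha)
    calc ‖∑' k, gkTerm J c NN x ψ k y‖ ^ 2
        = ((∑' k, gkTerm J c NN x ψ k y) *
            (starRingEnd ℂ) (∑' k, gkTerm J c NN x ψ k y)).re := by
          rw [Complex.mul_conj, Complex.ofReal_re, Complex.sq_norm]
      _ = (∑' p : ℕ × ℕ, w p y).re := by rw [hmul]
      _ = ∑' p : ℕ × ℕ, (w p y).re := Complex.re_tsum (hwsummable y)
  have hwint : ∀ p : ℕ × ℕ, Integrable (fun y => w p y) μ := by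
    intro p
    refine Integrable.mono' (integrable_const (a p.1 * a p.2))
      (hwcont p).aestronglyMeasurable (ae_of_all _ fun y => (hwnorm p y).le)
  have step3 : ∀ p : ℕ × ℕ, ∫ y, (w p y).re ∂μ =
      (if p.1 = p.2 then r p.1 ^ 2 * ‖ψ p.1‖ ^ 2 else 0) := by
    rintro ⟨k, l⟩
    have hptw : ∀ y : ℝ, w (k, l) y =
        ((r k * r l : ℝ) : ℂ) * (ψ k * (starRingEnd ℂ) (ψ l)) *
          Complex.exp (Complex.I * ((J k - J l : ℝ) : ℂ) * (y : ℂ)) := by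
      intro y
      have hexp : Complex.exp (Complex.I * (J k : ℂ) * (y : ℂ)) *
          Complex.exp (-(Complex.I * (J l : ℂ) * (y : ℂ))) =
          Complex.exp (Complex.I * ((J k - J l : ℝ) : ℂ) * (y : ℂ)) := by
        rw [← Complex.exp_add]; congr 1; push_cast; ring
      rw [hwdef]
      simp only
      rw [gkTerm_eq, gkTerm_eq, ← hexp, map_mul, map_mul, Complex.conj_ofReal,
        ← Complex.exp_conj]
      have hconjexp : (starRingEnd ℂ) (Complex.I * (J l : ℂ) * (y : ℂ)) =
          -(Complex.I * (J l : ℂ) * (y : ℂ)) := by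
        simp [Complex.conj_ofReal]
      rw [hconjexp]
      simp only [hrdef]
      push_cast
      ring
    have h1 : ∫ y, w (k, l) y ∂μ =
        ((r k * r l : ℝ) : ℂ) * (ψ k * (starRingEnd ℂ) (ψ l)) *
          (if k = l then 1 else 0) := by
      calc ∫ y, w (k, l) y ∂μ
          = ∫ y, ((r k * r l : ℝ) : ℂ) * (ψ k * (starRingEnd ℂ) (ψ l)) *
              Complex.exp (Complex.I * ((J k - J l : ℝ) : ℂ) * (y : ℂ)) ∂μ := by
            exact integral_congr_ae (ae_of_all _ hptw)
        _ = ((r k * r l : ℝ) : ℂ) * (ψ k * (starRingEnd ℂ) (ψ l)) *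
              ∫ y, Complex.exp (Complex.I * ((J k - J l : ℝ) : ℂ) * (y : ℂ)) ∂μ :=
            MeasureTheory.integral_const_mul _ _
        _ = _ := by rw [hμint k l]
    have h2 : ∫ y, (w (k, l) y).re ∂μ = (∫ y, w (k, l) y ∂μ).re := by
      have h2' := integral_re (hwint (k, l))
      simp only [RCLike.re_to_complex] at h2'
      exact h2'
    rw [h2, h1]
    by_cases hkl : k = l
    · subst hkl
      rw [if_pos rfl, if_pos rfl, mul_one, Complex.mul_conj, ← Complex.ofReal_mul,
        Complex.ofReal_re, Complex.normSq_eq_norm_sq]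
      ring
    · rw [if_neg hkl, if_neg hkl, mul_zero, Complex.zero_re]
  have step2 : ∫ y, ‖∑' k, gkTerm J c NN x ψ k y‖ ^ 2 ∂μ
      = ∑' p : ℕ × ℕ, ∫ y, (w p y).re ∂μ := by
    rw [integral_congr_ae (ae_of_all _ step1)]
    refine integral_tsum (fun p => (Complex.continuous_re.comp (hwcont p)).aestronglyMeasurable)
      ?_
    have hb : ∀ p : ℕ × ℕ, ∫⁻ y, ‖(w p y).re‖₊ ∂μ ≤ ENNReal.ofReal (a p.1 * a p.2) := by
      intro p
      have hy : ∀ y : ℝ, (‖(w p y).re‖₊ : ℝ≥0∞) ≤ ENNReal.ofReal (a p.1 * a p.2) := by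
        intro y
        rw [← enorm_eq_nnnorm, ← ofReal_norm_eq_enorm]
        refine ENNReal.ofReal_le_ofReal ?_
        rw [← hwnorm p y, Real.norm_eq_abs]
        exact Complex.abs_re_le_norm _
      calc ∫⁻ y, ‖(w p y).re‖₊ ∂μ ≤ ∫⁻ _, ENNReal.ofReal (a p.1 * a p.2) ∂μ :=
            lintegral_mono hy
        _ = ENNReal.ofReal (a p.1 * a p.2) := by simp
    refine ne_top_of_le_ne_top ?_ (ENNReal.tsum_le_tsum hb)
    have hsplit : ∑' (p : ℕ × ℕ), ENNReal.ofReal (a p.1 * a p.2)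
        = (∑' k, ENNReal.ofReal (a k)) * (∑' k, ENNReal.ofReal (a k)) := by
      rw [ENNReal.tsum_prod']
      simp_rw [ENNReal.ofReal_mul (ha_nonneg _), ENNReal.tsum_mul_left,
        ENNReal.tsum_mul_right]
    rw [hsplit, ← ENNReal.ofReal_tsum_of_nonneg ha_nonneg ha]
    exact ENNReal.mul_ne_top ENNReal.ofReal_ne_top ENNReal.ofReal_ne_top
  rw [step2]
  simp_rw [step3]
  exact tsum_eq_tsum_of_ne_zero_bij (fun k => ((k : ℕ), (k : ℕ)))
    (fun p q hpq => Subtype.ext (congrArg Prod.fst hpq))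
    (by
      rintro ⟨k, l⟩ hp
      simp only [Function.mem_support] at hp
      have hkl : k = l := by by_contra h; exact hp (if_neg h)
      subst hkl
      exact ⟨⟨k, fun h0 => hp ((if_pos rfl).trans h0)⟩, rfl⟩)
    (fun k => if_pos rfl)

end

section
variable {J : ℕ → ℝ} {c : ℕ → ℝ} {NN : ℝ → ℝ} {x : ℝ} (ψ : lp (fun _ : ℕ => ℂ) 2)
  (μ : Measure ℝ) [IsProbabilityMeasure μ]

private lemma gk_integrable (hc : ∀ k, 0 < c k) (hx0 : 0 ≤ x)
    (hsum : Summable (fun k => x ^ k / c k)) (hpos : 0 < NN x) :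
    Integrable (fun y => ‖∑' k, gkTerm J c NN x ψ k y‖ ^ 2) μ := by
  have ha : Summable (fun k => ((NN x)⁻¹ * Real.sqrt x ^ k / Real.sqrt (c k)) * ‖ψ k‖) :=
    a_summable c NN x ψ hc hx0 hpos hsum
  have hnorm : ∀ k y, ‖gkTerm J c NN x ψ k y‖
      = ((NN x)⁻¹ * Real.sqrt x ^ k / Real.sqrt (c k)) * ‖ψ k‖ := fun k y =>
    gkTerm_norm ψ hpos k y
  have hcont : Continuous (fun y => ∑' k, gkTerm J c NN x ψ k y) :=
    continuous_tsum (fun k => gkTerm_continuous ψ k) ha (fun k y => (hnorm k y).le)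
  refine Integrable.mono'
    (integrable_const ((∑' k, ((NN x)⁻¹ * Real.sqrt x ^ k / Real.sqrt (c k)) * ‖ψ k‖) ^ 2))
    (hcont.norm.pow 2).aestronglyMeasurable (ae_of_all _ fun y => ?_)
  have h1 : ‖∑' k, gkTerm J c NN x ψ k y‖
      ≤ ∑' k, ((NN x)⁻¹ * Real.sqrt x ^ k / Real.sqrt (c k)) * ‖ψ k‖ := by
    calc ‖∑' k, gkTerm J c NN x ψ k y‖ ≤ ∑' k, ‖gkTerm J c NN x ψ k y‖ :=
          norm_tsum_le_tsum_norm (by simpa [hnorm] using ha)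
      _ = _ := by simp_rw [hnorm]
  have h2 : (0:ℝ) ≤ ‖∑' k, gkTerm J c NN x ψ k y‖ := norm_nonneg _
  calc ‖‖∑' k, gkTerm J c NN x ψ k y‖ ^ 2‖ = ‖∑' k, gkTerm J c NN x ψ k y‖ ^ 2 := by
        simp [abs_of_nonneg (pow_nonneg h2 2)]
    _ ≤ _ := by nlinarith

end

noncomputable def gkNorm (c : ℕ → ℝ) : ℝ → ℝ := fun x =>
  Real.sqrt ((∑' k, ENNReal.ofReal (x ^ k / c k)).toReal)

private lemma gkNorm_measurable (c : ℕ → ℝ) : Measurable (gkNorm c) := by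
  refine Real.continuous_sqrt.measurable.comp ?_
  refine (Measurable.ennreal_tsum fun k => ?_).ennreal_toReal
  exact ENNReal.measurable_ofReal.comp ((measurable_id.pow_const k).div_const (c k))

private lemma gkNorm_eq {c : ℕ → ℝ} {NN : ℝ → ℝ} {x : ℝ} (hc : ∀ k, 0 < c k) (hx0 : 0 ≤ x)
    (hsum : HasSum (fun k => x ^ k / c k) (NN x ^ 2)) (hpos : 0 < NN x) :
    gkNorm c x = NN x := by
  unfold gkNorm
  have hnn : ∀ k, 0 ≤ x ^ k / c k := fun k => div_nonneg (pow_nonneg hx0 _) (hc k).le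
  rw [← ENNReal.ofReal_tsum_of_nonneg hnn hsum.summable, ENNReal.toReal_ofReal
    (tsum_nonneg hnn), hsum.tsum_eq, Real.sqrt_sq hpos.le]


section
variable {J : ℕ → ℝ} {c : ℕ → ℝ} (ψ : lp (fun _ : ℕ => ℂ) 2)

private lemma gkNorm_rr_sq_summable (hc : ∀ k, 0 < c k) (x : ℝ) :
    Summable (fun k => ((gkNorm c x)⁻¹ * Real.sqrt x ^ k / Real.sqrt (c k)) ^ 2) := by
  classical
  have hgen : ∀ k, ((gkNorm c x)⁻¹ * Real.sqrt x ^ k / Real.sqrt (c k)) ^ 2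
      = ((gkNorm c x)⁻¹) ^ 2 * ((Real.sqrt x ^ 2) ^ k / c k) := by
    intro k
    rw [div_pow, mul_pow, ← pow_mul, mul_comm k 2, pow_mul, Real.sq_sqrt (hc k).le]
    ring
  by_cases hs : Summable (fun k => (Real.sqrt x ^ 2) ^ k / c k)
  · exact ((hs.mul_left (((gkNorm c x)⁻¹) ^ 2)).congr (fun k => (hgen k).symm))
  · -- then x ≥ 0 and the series diverges, so gkNorm c x = 0
    have hx0 : 0 ≤ x := by
      by_contra hx
      push_neg at hx
      apply hs
      have : ∀ k, (Real.sqrt x ^ 2) ^ k / c k = (0:ℝ) ^ k / c k := by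
        intro k; rw [Real.sqrt_eq_zero_of_nonpos hx.le]; norm_num
      rw [funext this]
      apply summable_of_ne_finset_zero (s := {0})
      intro k hk
      have : k ≠ 0 := by simpa using hk
      simp [zero_pow this]
    have hsq : Real.sqrt x ^ 2 = x := Real.sq_sqrt hx0
    rw [hsq] at hs
    have htop : (∑' k, ENNReal.ofReal (x ^ k / c k)) = ⊤ := by
      by_contra h
      apply hs
      have := ENNReal.summable_toReal h
      refine this.congr fun k => ?_
      rw [ENNReal.toReal_ofReal (div_nonneg (pow_nonneg hx0 _) (hc k).le)]
    have h0 : gkNorm c x = 0 := by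
      unfold gkNorm; rw [htop]; simp
    refine summable_of_ne_finset_zero (s := (∅ : Finset ℕ)) fun k _ => ?_
    rw [h0]
    simp

private lemma gkNorm_summable_all (hc : ∀ k, 0 < c k) (x y : ℝ) :
    Summable (fun k => gkTerm J c (gkNorm c) x ψ k y) := by
  apply Summable.of_norm
  have hnorm : ∀ k, ‖gkTerm J c (gkNorm c) x ψ k y‖
      = |(gkNorm c x)⁻¹ * Real.sqrt x ^ k / Real.sqrt (c k)| * ‖ψ k‖ := by
    intro k
    rw [gkTerm_eq]
    rw [norm_mul, norm_mul, Complex.norm_real, Real.norm_eq_abs]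
    have : ‖Complex.exp (Complex.I * (J k : ℂ) * (y : ℂ))‖ = 1 := by
      rw [Complex.norm_exp]
      simp [Complex.mul_re]
    rw [this]; ring
  refine Summable.of_nonneg_of_le (fun k => norm_nonneg _) (fun k => ?_)
    (((gkNorm_rr_sq_summable hc x).add (psi_sq_summable ψ)).div_const 2)
  rw [hnorm]
  set t := (gkNorm c x)⁻¹ * Real.sqrt x ^ k / Real.sqrt (c k)
  nlinarith [sq_nonneg (|t| - ‖ψ k‖), sq_abs t, abs_nonneg t, norm_nonneg (ψ k),
    mul_nonneg (abs_nonneg t) (norm_nonneg (ψ k))]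

private lemma gkTerm_measurable (J : ℕ → ℝ) (c : ℕ → ℝ) (k : ℕ) :
    Measurable (fun p : ℝ × ℝ => gkTerm J c (gkNorm c) p.1 ψ k p.2) := by
  unfold gkTerm gkCoeff
  apply Measurable.mul _ measurable_const
  apply Measurable.comp continuous_star.measurable
  apply Measurable.mul
  · apply Complex.measurable_ofReal.comp
    apply Measurable.div_const
    exact ((gkNorm_measurable c).comp measurable_fst).inv.mul
      ((Real.continuous_sqrt.measurable.comp measurable_fst).pow_const k)
  · apply Complex.continuous_exp.measurable.comp
    apply Measurable.neg
    exact (measurable_const.mul measurable_const).mul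
      (Complex.measurable_ofReal.comp measurable_snd)

private lemma gkSum_measurable (J : ℕ → ℝ) (hc : ∀ k, 0 < c k) :
    Measurable (fun p : ℝ × ℝ => ∑' k, gkTerm J c (gkNorm c) p.1 ψ k p.2) := by
  apply measurable_of_tendsto_metrizable
    (f := fun n (p : ℝ × ℝ) => ∑ k ∈ Finset.range n, gkTerm J c (gkNorm c) p.1 ψ k p.2)
  · intro n
    exact Finset.measurable_sum _ (fun k _ => gkTerm_measurable ψ J c k)
  · rw [tendsto_pi_nhds]
    intro p
    exact (gkNorm_summable_all ψ hc p.1 p.2).hasSum.tendsto_sum_nat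

end

set_option maxHeartbeats 1000000 in
/-- Resolution of identity for Gazeau–Klauder coherent states.
With `(J_k)` distinct reals, `c_k > 0`, `N(x)² = ∑ x^k/c_k` convergent and positive on
`[0,R)`, a weight `τ ≥ 0` satisfying the moment conditions
`∫_0^R (x^k/N(x)²) τ(x) dx = c_k`, and a measure `μ` with
`∫ e^{i(J_k−J_l)y} μ(dy) = δ_{kl}`, one has, for every `ψ ∈ ℓ²(ℕ₀)`,
`∫_ℝ ∫_0^R |⟨J,x,y|ψ⟩|² τ(x) dx μ(dy) = ‖ψ‖²`, where
`⟨J,x,y|ψ⟩ = ∑_k conj(gkCoeff k) ψ_k`. -/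
theorem gazeauKlauder_resolution_of_identity
    (J : ℕ → ℝ) (hJ : Function.Injective J)
    (c : ℕ → ℝ) (hc : ∀ k, 0 < c k)
    (R : ℝ≥0∞) (hR : 0 < R)
    (NN : ℝ → ℝ)
    (hNN : ∀ x : ℝ, 0 ≤ x → ENNReal.ofReal x < R →
      HasSum (fun k => x ^ k / c k) (NN x ^ 2) ∧ 0 < NN x)
    (τ : ℝ → ℝ) (hτ_meas : Measurable τ)
    (hτ_nonneg : ∀ x : ℝ, 0 ≤ x → ENNReal.ofReal x < R → 0 ≤ τ x)
    (hmoment : ∀ k : ℕ,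
      ∫ x in {x : ℝ | 0 ≤ x ∧ ENNReal.ofReal x < R}, (x ^ k / NN x ^ 2) * τ x = c k)
    (μ : Measure ℝ)
    (hμ : ∀ k l : ℕ,
      ∫ y, Complex.exp (Complex.I * (((J k - J l : ℝ)) : ℂ) * (y : ℂ)) ∂μ =
        if k = l then 1 else 0)
    (ψ : lp (fun _ : ℕ => ℂ) 2) :
    ∫ y, (∫ x in {x : ℝ | 0 ≤ x ∧ ENNReal.ofReal x < R},
        ‖∑' k, (starRingEnd ℂ) (gkCoeff NN c J x y k) * ψ k‖ ^ 2 * τ x) ∂μ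
      = ‖ψ‖ ^ 2 := by
  classical
  -- μ is a probability measure
  have hprob : IsProbabilityMeasure μ := by
    constructor
    have h00 := hμ 0 0
    simp only [sub_self, Complex.ofReal_zero, mul_zero, zero_mul, Complex.exp_zero,
      if_true, eq_self_iff_true] at h00
    rw [integral_const, Complex.real_smul, mul_one] at h00
    rw [← ENNReal.toReal_eq_one_iff]
    exact_mod_cast h00
  haveI := hprob
  set S : Set ℝ := {x : ℝ | 0 ≤ x ∧ ENNReal.ofReal x < R} with hSdef
  have hS : MeasurableSet S := by
    have : S = Set.Ici (0:ℝ) ∩ ENNReal.ofReal ⁻¹' Set.Iio R := by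
      ext x; simp [hSdef, Set.mem_Ici]
    rw [this]
    exact measurableSet_Ici.inter (ENNReal.measurable_ofReal measurableSet_Iio)
  set ν : Measure ℝ := volume.restrict S with hνdef
  have hNN'_eq : ∀ x ∈ S, gkNorm c x = NN x := fun x hx =>
    gkNorm_eq hc hx.1 (hNN x hx.1 hx.2).1 (hNN x hx.1 hx.2).2
  have hterm_eq : ∀ x ∈ S, ∀ y k,
      gkTerm J c (gkNorm c) x ψ k y = gkTerm J c NN x ψ k y := by
    intro x hx y k
    unfold gkTerm gkCoeff
    rw [hNN'_eq x hx]
  -- the measurable version of the integrand, in ℝ≥0∞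
  set Hfun : ℝ × ℝ → ℝ≥0∞ := fun p =>
    ENNReal.ofReal (‖∑' k, gkTerm J c (gkNorm c) p.1 ψ k p.2‖ ^ 2 * τ p.1) with hHdef
  have hH_meas : Measurable Hfun := by
    apply ENNReal.measurable_ofReal.comp
    exact (((gkSum_measurable ψ J hc).norm.pow_const 2).mul (hτ_meas.comp measurable_fst))
  set Lfun : ℝ → ℝ≥0∞ := fun y => ∫⁻ x, Hfun (x, y) ∂ν with hLdef
  -- inner integral as toReal of a lintegral
  have hinner : ∀ y, (∫ x in S,
      ‖∑' k, (starRingEnd ℂ) (gkCoeff NN c J x y k) * ψ k‖ ^ 2 * τ x) = (Lfun y).toReal := by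
    intro y
    have hmeasy : Measurable (fun x => ‖∑' k, gkTerm J c (gkNorm c) x ψ k y‖ ^ 2 * τ x) := by
      refine Measurable.mul ?_ hτ_meas
      exact ((gkSum_measurable ψ J hc).comp
        (measurable_id.prodMk measurable_const)).norm.pow_const 2
    have haeeq : (fun x => ‖∑' k, (starRingEnd ℂ) (gkCoeff NN c J x y k) * ψ k‖ ^ 2 * τ x)
        =ᵐ[ν] (fun x => ‖∑' k, gkTerm J c (gkNorm c) x ψ k y‖ ^ 2 * τ x) := by
      refine (ae_restrict_iff' hS).2 (ae_of_all _ fun x hx => ?_)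
      have htse : (∑' k, (starRingEnd ℂ) (gkCoeff NN c J x y k) * ψ k)
          = ∑' k, gkTerm J c (gkNorm c) x ψ k y :=
        (tsum_congr fun k => (hterm_eq x hx y k)).symm
      simp only [htse]
    have hnn : 0 ≤ᵐ[ν] (fun x => ‖∑' k, gkTerm J c (gkNorm c) x ψ k y‖ ^ 2 * τ x) := by
      refine (ae_restrict_iff' hS).2 (ae_of_all _ fun x hx => ?_)
      exact mul_nonneg (by positivity) (hτ_nonneg x hx.1 hx.2)
    rw [integral_congr_ae haeeq,
      integral_eq_lintegral_of_nonneg_ae hnn hmeasy.aestronglyMeasurable]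
  -- Key 1 : the y-integral for fixed x ∈ S
  have hKey1 : ∀ x ∈ S, ∫⁻ y, Hfun (x, y) ∂μ = ENNReal.ofReal
      ((∑' k, ((NN x)⁻¹ * Real.sqrt x ^ k / Real.sqrt (c k)) ^ 2 * ‖ψ k‖ ^ 2) * τ x) := by
    intro x hx
    obtain ⟨hsum, hpos⟩ := hNN x hx.1 hx.2
    have hτx : 0 ≤ τ x := hτ_nonneg x hx.1 hx.2
    have hcont : Continuous (fun y => ∑' k, gkTerm J c NN x ψ k y) :=
      continuous_tsum (fun k => gkTerm_continuous ψ k)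
        (a_summable c NN x ψ hc hx.1 hpos hsum.summable)
        (fun k y => (gkTerm_norm ψ hpos k y).le)
    calc ∫⁻ y, Hfun (x, y) ∂μ
        = ∫⁻ y, ENNReal.ofReal (‖∑' k, gkTerm J c NN x ψ k y‖ ^ 2) *
            ENNReal.ofReal (τ x) ∂μ := by
          refine lintegral_congr fun y => ?_
          rw [hHdef]
          simp only
          rw [tsum_congr fun k => hterm_eq x hx y k,
            ENNReal.ofReal_mul (by positivity)]
      _ = (∫⁻ y, ENNReal.ofReal (‖∑' k, gkTerm J c NN x ψ k y‖ ^ 2) ∂μ) *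
            ENNReal.ofReal (τ x) :=
          lintegral_mul_const _ (ENNReal.measurable_ofReal.comp (hcont.norm.pow 2).measurable)
      _ = ENNReal.ofReal (∫ y, ‖∑' k, gkTerm J c NN x ψ k y‖ ^ 2 ∂μ) *
            ENNReal.ofReal (τ x) := by
          rw [← ofReal_integral_eq_lintegral_ofReal
            (gk_integrable ψ μ hc hx.1 hsum.summable hpos)
            (ae_of_all _ fun y => by positivity)]
      _ = ENNReal.ofReal
            (∑' k, ((NN x)⁻¹ * Real.sqrt x ^ k / Real.sqrt (c k)) ^ 2 * ‖ψ k‖ ^ 2) *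
            ENNReal.ofReal (τ x) := by
          rw [gk_yintegral ψ μ hc hx.1 hsum.summable hpos hμ]
      _ = _ := by
          rw [← ENNReal.ofReal_mul (tsum_nonneg fun k => by positivity)]
  -- summability of the diagonal series
  have hdsum : ∀ x ∈ S, Summable (fun k =>
      ((NN x)⁻¹ * Real.sqrt x ^ k / Real.sqrt (c k)) ^ 2 * ‖ψ k‖ ^ 2) := by
    intro x hx
    obtain ⟨hsum, hpos⟩ := hNN x hx.1 hx.2
    refine Summable.of_nonneg_of_le (fun k => by positivity) (fun k => ?_)
      ((r_sq_summable c NN x hc hx.1 hsum.summable).mul_right (‖ψ‖ ^ 2))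
    have h1 : ‖ψ k‖ ≤ ‖ψ‖ := lp.norm_apply_le_norm (by norm_num) ψ k
    have h2 : ‖ψ k‖ ^ 2 ≤ ‖ψ‖ ^ 2 := by nlinarith [norm_nonneg (ψ k)]
    exact mul_le_mul_of_nonneg_left h2 (by positivity)
  -- Key 2 : the x-integral of the diagonal series
  have hKey2 : ∫⁻ x, ENNReal.ofReal
      ((∑' k, ((NN x)⁻¹ * Real.sqrt x ^ k / Real.sqrt (c k)) ^ 2 * ‖ψ k‖ ^ 2) * τ x) ∂ν
      = ENNReal.ofReal (‖ψ‖ ^ 2) := by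
    have hmk : ∀ k : ℕ, AEMeasurable (fun x => ENNReal.ofReal
        ((((NN x)⁻¹ * Real.sqrt x ^ k / Real.sqrt (c k)) ^ 2 * ‖ψ k‖ ^ 2) * τ x)) ν := by
      intro k
      have hm : Measurable (fun x => ENNReal.ofReal
          ((((gkNorm c x)⁻¹ * Real.sqrt x ^ k / Real.sqrt (c k)) ^ 2 * ‖ψ k‖ ^ 2) * τ x)) := by
        apply ENNReal.measurable_ofReal.comp
        refine ((Measurable.pow_const ?_ 2).mul_const _).mul hτ_meas
        exact ((gkNorm_measurable c).inv.mul
          ((Real.continuous_sqrt.measurable.comp measurable_id).pow_const k)).div_const _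
      refine hm.aemeasurable.congr ?_
      refine (ae_restrict_iff' hS).2 (ae_of_all _ fun x hx => ?_)
      beta_reduce
      rw [hNN'_eq x hx]
    calc ∫⁻ x, ENNReal.ofReal
          ((∑' k, ((NN x)⁻¹ * Real.sqrt x ^ k / Real.sqrt (c k)) ^ 2 * ‖ψ k‖ ^ 2) * τ x) ∂ν
        = ∫⁻ x, ∑' k, ENNReal.ofReal
            ((((NN x)⁻¹ * Real.sqrt x ^ k / Real.sqrt (c k)) ^ 2 * ‖ψ k‖ ^ 2) * τ x) ∂ν := by
          refine lintegral_congr_ae ((ae_restrict_iff' hS).2 (ae_of_all _ fun x hx => ?_))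
          have hτx : 0 ≤ τ x := hτ_nonneg x hx.1 hx.2
          beta_reduce
          rw [← tsum_mul_right]
          exact ENNReal.ofReal_tsum_of_nonneg (fun k => mul_nonneg (by positivity) hτx)
            ((hdsum x hx).mul_right _)
      _ = ∑' k, ∫⁻ x, ENNReal.ofReal
            ((((NN x)⁻¹ * Real.sqrt x ^ k / Real.sqrt (c k)) ^ 2 * ‖ψ k‖ ^ 2) * τ x) ∂ν :=
          lintegral_tsum hmk
      _ = ∑' k, ENNReal.ofReal (‖ψ k‖ ^ 2) := by
          refine tsum_congr fun k => ?_
          -- the moment integral, in ℝ≥0∞ form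
          have hmAES : AEStronglyMeasurable (fun x => x ^ k / NN x ^ 2 * τ x) ν := by
            have hm : Measurable (fun x : ℝ => x ^ k / gkNorm c x ^ 2 * τ x) :=
              ((measurable_id.pow_const k).div ((gkNorm_measurable c).pow_const 2)).mul hτ_meas
            refine hm.aestronglyMeasurable.congr ?_
            refine (ae_restrict_iff' hS).2 (ae_of_all _ fun x hx => ?_)
            beta_reduce
            rw [hNN'_eq x hx]
          have hmnn : 0 ≤ᵐ[ν] fun x => x ^ k / NN x ^ 2 * τ x := by
            refine (ae_restrict_iff' hS).2 (ae_of_all _ fun x hx => ?_)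
            exact mul_nonneg (div_nonneg (pow_nonneg hx.1 _) (sq_nonneg _))
              (hτ_nonneg x hx.1 hx.2)
          have h1 : ∫ x, x ^ k / NN x ^ 2 * τ x ∂ν
              = (∫⁻ x, ENNReal.ofReal (x ^ k / NN x ^ 2 * τ x) ∂ν).toReal :=
            integral_eq_lintegral_of_nonneg_ae hmnn hmAES
          have hTtoReal : (∫⁻ x, ENNReal.ofReal (x ^ k / NN x ^ 2 * τ x) ∂ν).toReal = c k := by
            rw [← h1]; exact hmoment k
          have hTne : (∫⁻ x, ENNReal.ofReal (x ^ k / NN x ^ 2 * τ x) ∂ν) ≠ ⊤ := by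
            intro h
            rw [h, ENNReal.toReal_top] at hTtoReal
            exact absurd hTtoReal.symm (hc k).ne'
          have hTval : (∫⁻ x, ENNReal.ofReal (x ^ k / NN x ^ 2 * τ x) ∂ν)
              = ENNReal.ofReal (c k) := by
            rw [← hTtoReal]
            exact (ENNReal.ofReal_toReal hTne).symm
          have hmom_aem : AEMeasurable (fun x => ENNReal.ofReal (x ^ k / NN x ^ 2 * τ x)) ν := by
            have hm : Measurable (fun x : ℝ =>
                ENNReal.ofReal (x ^ k / gkNorm c x ^ 2 * τ x)) :=
              ENNReal.measurable_ofReal.comp (((measurable_id.pow_const k).div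
                ((gkNorm_measurable c).pow_const 2)).mul hτ_meas)
            refine hm.aemeasurable.congr ?_
            refine (ae_restrict_iff' hS).2 (ae_of_all _ fun x hx => ?_)
            beta_reduce
            rw [hNN'_eq x hx]
          calc ∫⁻ x, ENNReal.ofReal
                ((((NN x)⁻¹ * Real.sqrt x ^ k / Real.sqrt (c k)) ^ 2 * ‖ψ k‖ ^ 2) * τ x) ∂ν
              = ∫⁻ x, ENNReal.ofReal (‖ψ k‖ ^ 2 / c k) *
                  ENNReal.ofReal (x ^ k / NN x ^ 2 * τ x) ∂ν := by
                refine lintegral_congr_ae ((ae_restrict_iff' hS).2 (ae_of_all _ fun x hx => ?_))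
                obtain ⟨hsum, hpos⟩ := hNN x hx.1 hx.2
                beta_reduce
                rw [← ENNReal.ofReal_mul (div_nonneg (sq_nonneg ‖ψ k‖) (hc k).le)]
                congr 1
                rw [r_sq c NN x hc hx.1]
                field_simp
            _ = ENNReal.ofReal (‖ψ k‖ ^ 2 / c k) *
                  ∫⁻ x, ENNReal.ofReal (x ^ k / NN x ^ 2 * τ x) ∂ν :=
                lintegral_const_mul'' _ hmom_aem
            _ = ENNReal.ofReal (‖ψ k‖ ^ 2 / c k) * ENNReal.ofReal (c k) := by rw [hTval]
            _ = ENNReal.ofReal (‖ψ k‖ ^ 2) := by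
                rw [← ENNReal.ofReal_mul (div_nonneg (sq_nonneg ‖ψ k‖) (hc k).le),
                  div_mul_cancel₀ _ (hc k).ne']
      _ = ENNReal.ofReal (‖ψ‖ ^ 2) := by
          rw [psi_norm_sq ψ, ENNReal.ofReal_tsum_of_nonneg (fun k => by positivity)
            (psi_sq_summable ψ)]
  -- swap the order of integration
  have hswap : ∫⁻ y, Lfun y ∂μ = ∫⁻ x, (∫⁻ y, Hfun (x, y) ∂μ) ∂ν := by
    exact (lintegral_lintegral_swap (f := fun x y => Hfun (x, y))
      ((hH_meas.comp (measurable_fst.prodMk measurable_snd)).aemeasurable)).symm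
  have hmid : ∫⁻ x, (∫⁻ y, Hfun (x, y) ∂μ) ∂ν = ENNReal.ofReal (‖ψ‖ ^ 2) := by
    rw [← hKey2]
    exact lintegral_congr_ae ((ae_restrict_iff' hS).2 (ae_of_all _ fun x hx => hKey1 x hx))
  have hLint : ∫⁻ y, Lfun y ∂μ = ENNReal.ofReal (‖ψ‖ ^ 2) := by rw [hswap, hmid]
  have hLmeas : Measurable Lfun := hH_meas.lintegral_prod_left'
  have hfin : ∀ᵐ y ∂μ, Lfun y < ⊤ :=
    ae_lt_top hLmeas (by rw [hLint]; exact ENNReal.ofReal_ne_top)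
  calc ∫ y, (∫ x in S,
        ‖∑' k, (starRingEnd ℂ) (gkCoeff NN c J x y k) * ψ k‖ ^ 2 * τ x) ∂μ
      = ∫ y, (Lfun y).toReal ∂μ := integral_congr_ae (ae_of_all _ hinner)
    _ = (∫⁻ y, Lfun y ∂μ).toReal := integral_toReal hLmeas.aemeasurable hfin
    _ = ‖ψ‖ ^ 2 := by rw [hLint]; exact ENNReal.toReal_ofReal (by positivity)
end
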